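/- Let m, n ≥ 1, let 𝒱 ∈ ℝ^{m×n} have nonnegative entries with every row and every column containing a strictly positive entry, and let λ > 0. Suppose b ∈ [0,1)^m and τ_b := (𝒱ᵀ(1_m − b))⁻¹ (entrywise reciprocal, which is well-defined and has strictly positive entries) together satisfy b_k/(1 − b_k) = ∑_{ℓ∈[n]} 𝒱_{kℓ} · τ_{b,ℓ}/(1 + λ τ_{b,ℓ}) for every k ∈ [m]. Then max_{k∈[m]} b_k ≤ (1 + λ / max_{k∈[m]} ∑_ℓ 𝒱_{kℓ})⁻¹. -/
import Mathlib


theorem onsager_fixed_point_bound (m n : ℕ) (hm : 0 < m) (hn : 0 < n)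
    (V : Matrix (Fin m) (Fin n) ℝ) (hV : ∀ k ℓ, 0 ≤ V k ℓ)
    (hrowpos : ∀ k, ∃ ℓ, 0 < V k ℓ) (hcolpos : ∀ ℓ, ∃ k, 0 < V k ℓ)
    (lam : ℝ) (hlam : 0 < lam)
    (b : Fin m → ℝ) (hb : ∀ k, b k ∈ Set.Ico (0 : ℝ) 1)
    (τ : Fin n → ℝ) (hτ : ∀ ℓ, τ ℓ = (∑ k, V k ℓ * (1 - b k))⁻¹)
    (hfix : ∀ k, b k / (1 - b k) = ∑ ℓ, V k ℓ * (τ ℓ / (1 + lam * τ ℓ))) :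
    Finset.univ.sup' (Finset.univ_nonempty_iff.mpr ⟨⟨0, hm⟩⟩) b ≤
      (1 + lam / Finset.univ.sup' (Finset.univ_nonempty_iff.mpr ⟨⟨0, hm⟩⟩)
          (fun k => ∑ ℓ, V k ℓ))⁻¹ := by
  set S := Finset.univ.sup' (Finset.univ_nonempty_iff.mpr ⟨⟨0, hm⟩⟩)
      (fun k => ∑ ℓ, V k ℓ) with hSdef
  have hSpos : 0 < S := by
    obtain ⟨ℓ0, hℓ0⟩ := hrowpos ⟨0, hm⟩
    have h1 : (0:ℝ) < ∑ ℓ, V ⟨0, hm⟩ ℓ :=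
      Finset.sum_pos' (fun ℓ _ => hV _ ℓ) ⟨ℓ0, Finset.mem_univ _, hℓ0⟩
    exact h1.trans_le (Finset.le_sup' (fun k => ∑ ℓ, V k ℓ) (Finset.mem_univ _))
  have hinv : (1 + lam / S)⁻¹ = S / (S + lam) := by
    rw [eq_div_iff (by positivity)]
    field_simp
  rw [hinv]
  apply Finset.sup'_le
  intro k _
  have hb0 := (hb k).1
  have hb1 : (0:ℝ) < 1 - b k := by have := (hb k).2; linarith
  have hτpos : ∀ ℓ, 0 < τ ℓ := by
    intro ℓ
    rw [hτ]
    apply inv_pos.mpr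
    obtain ⟨k', hk'⟩ := hcolpos ℓ
    refine Finset.sum_pos' (fun j _ => mul_nonneg (hV j ℓ) ?_)
      ⟨k', Finset.mem_univ _, mul_pos hk' ?_⟩
    · have := (hb j).2; linarith
    · have := (hb k').2; linarith
  have hterm : ∀ ℓ, τ ℓ / (1 + lam * τ ℓ) ≤ 1 / lam := by
    intro ℓ
    have hτℓ := hτpos ℓ
    have h1 : (0:ℝ) < 1 + lam * τ ℓ := by positivity
    rw [div_le_div_iff₀ h1 hlam]
    nlinarith
  have hsum : b k / (1 - b k) ≤ S / lam := by
    rw [hfix k]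
    calc ∑ ℓ, V k ℓ * (τ ℓ / (1 + lam * τ ℓ))
        ≤ ∑ ℓ, V k ℓ * (1 / lam) :=
          Finset.sum_le_sum (fun ℓ _ => mul_le_mul_of_nonneg_left (hterm ℓ) (hV k ℓ))
      _ = (∑ ℓ, V k ℓ) / lam := by rw [← Finset.sum_mul]; ring
      _ ≤ S / lam := by
          gcongr
          exact Finset.le_sup' (fun k => ∑ ℓ, V k ℓ) (Finset.mem_univ k)
  rw [div_le_div_iff₀ hb1 hlam] at hsum
  rw [le_div_iff₀ (by positivity)]
  nlinarith
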